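/- Let $\bar{X}, X \in \mathbb{R}^{t \times r}$, $\rho > 0$, and define $\bar{\Omega} = \rho I + \bar{X}^\top \bar{X}$, $\Omega = \rho I + X^\top X$, and $\Xi = X - \bar{X}$. Then for every $a \in \mathbb{R}^r$: $|a^\top(\bar{\Omega} - \Omega)a| \leq \frac{2}{\sqrt{\rho}}\,\|a\|_{\Omega}^2\,\|\Xi\| + \frac{1}{\rho}\,\|a\|_{\Omega}^2\,\|\Xi\|^2$. -/

import Mathlib

open Matrix

/-- Spectral (operator) norm of a real matrix, viewed as the operator norm of the
induced linear map between Euclidean spaces. -/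
noncomputable def opNorm {n m : ℕ} (A : Matrix (Fin n) (Fin m) ℝ) : ℝ :=
  ‖LinearMap.toContinuousLinearMap (Matrix.toEuclideanLin A)‖

/-- Euclidean norm of a vector. -/
noncomputable def vecNorm {d : ℕ} (a : Fin d → ℝ) : ℝ := Real.sqrt (a ⬝ᵥ a)

/-- Weighted norm `‖a‖_Ω = sqrt (aᵀ Ω a)`. -/
noncomputable def wnorm {r : ℕ} (Ω : Matrix (Fin r) (Fin r) ℝ) (a : Fin r → ℝ) : ℝ :=
  Real.sqrt (a ⬝ᵥ (Ω *ᵥ a))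

/-- `k`-th largest singular value of a matrix, characterized as the distance (in the
spectral norm) to the set of matrices of rank `< k` (approximation numbers). -/
noncomputable def singVal {n m : ℕ} (k : ℕ) (A : Matrix (Fin n) (Fin m) ℝ) : ℝ :=
  sInf {c | ∃ B : Matrix (Fin n) (Fin m) ℝ, B.rank < k ∧ c = opNorm (A - B)}

lemma dself_nonneg {d : ℕ} (v : Fin d → ℝ) : 0 ≤ v ⬝ᵥ v :=
  Finset.sum_nonneg fun i _ => mul_self_nonneg _

lemma vecNorm_eq_norm {d : ℕ} (a : Fin d → ℝ) :
    vecNorm a = ‖(WithLp.equiv 2 (Fin d → ℝ)).symm a‖ := by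
  rw [vecNorm, EuclideanSpace.norm_eq]
  congr 1
  simp [dotProduct, Real.norm_eq_abs, sq_abs, sq]

lemma vecNorm_sq {d : ℕ} (a : Fin d → ℝ) : vecNorm a ^ 2 = a ⬝ᵥ a := by
  rw [vecNorm, Real.sq_sqrt (dself_nonneg a)]

lemma vecNorm_nonneg {d : ℕ} (a : Fin d → ℝ) : 0 ≤ vecNorm a := Real.sqrt_nonneg _

lemma cs_dot {d : ℕ} (u v : Fin d → ℝ) : |u ⬝ᵥ v| ≤ vecNorm u * vecNorm v := by
  have h := abs_real_inner_le_norm ((WithLp.equiv 2 (Fin d → ℝ)).symm u)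
      ((WithLp.equiv 2 (Fin d → ℝ)).symm v)
  rw [show inner ℝ ((WithLp.equiv 2 (Fin d → ℝ)).symm u) ((WithLp.equiv 2 (Fin d → ℝ)).symm v) = u ⬝ᵥ v from by
    change v ⬝ᵥ star u = _; rw [star_trivial, dotProduct_comm]] at h
  rw [vecNorm_eq_norm, vecNorm_eq_norm]
  exact h

lemma mulVec_vecNorm_le {n m : ℕ} (A : Matrix (Fin n) (Fin m) ℝ) (a : Fin m → ℝ) :
    vecNorm (A *ᵥ a) ≤ opNorm A * vecNorm a := by
  rw [vecNorm_eq_norm, vecNorm_eq_norm]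
  have h := (LinearMap.toContinuousLinearMap (Matrix.toEuclideanLin A)).le_opNorm
      ((WithLp.equiv 2 (Fin m → ℝ)).symm a)
  have he : (LinearMap.toContinuousLinearMap (Matrix.toEuclideanLin A))
      ((WithLp.equiv 2 (Fin m → ℝ)).symm a) = (WithLp.equiv 2 (Fin n → ℝ)).symm (A *ᵥ a) := by
    rfl
  rw [he] at h
  exact h

lemma quadform {t r : ℕ} (B : Matrix (Fin t) (Fin r) ℝ) (a : Fin r → ℝ) :
    a ⬝ᵥ ((Bᵀ * B) *ᵥ a) = (B *ᵥ a) ⬝ᵥ (B *ᵥ a) := by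
  rw [← Matrix.mulVec_mulVec, Matrix.dotProduct_mulVec, Matrix.vecMul_transpose]

set_option maxHeartbeats 1000000 in
/-- quadratic-form perturbation bound between the two precision
matrices. -/
theorem stmt_17 {t r : ℕ} (Xbar X : Matrix (Fin t) (Fin r) ℝ) (ρ : ℝ) (hρ : 0 < ρ)
    (Ωbar Ω : Matrix (Fin r) (Fin r) ℝ) (Ξ : Matrix (Fin t) (Fin r) ℝ)
    (hΩbar : Ωbar = ρ • (1 : Matrix (Fin r) (Fin r) ℝ) + Xbarᵀ * Xbar)
    (hΩ : Ω = ρ • (1 : Matrix (Fin r) (Fin r) ℝ) + Xᵀ * X)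
    (hΞ : Ξ = X - Xbar) :
    ∀ a : Fin r → ℝ,
      |a ⬝ᵥ ((Ωbar - Ω) *ᵥ a)| ≤
        2 / Real.sqrt ρ * (wnorm Ω a) ^ 2 * opNorm Ξ
          + 1 / ρ * (wnorm Ω a) ^ 2 * (opNorm Ξ) ^ 2 := by
  intro a
  have hXbar : Xbar = X - Ξ := by rw [hΞ, sub_sub_cancel]
  set u := X *ᵥ a with hu
  set w := Ξ *ᵥ a with hw
  have hub : Xbar *ᵥ a = u - w := by rw [hXbar, Matrix.sub_mulVec]
  have hdiff : a ⬝ᵥ ((Ωbar - Ω) *ᵥ a) = w ⬝ᵥ w - 2 * (u ⬝ᵥ w) := by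
    rw [hΩbar, hΩ, add_sub_add_left_eq_sub, Matrix.sub_mulVec, dotProduct_sub,
      quadform, quadform, hub, ← hu]
    simp only [dotProduct_sub, sub_dotProduct, dotProduct_comm w u]
    ring
  have hval : a ⬝ᵥ (Ω *ᵥ a) = ρ * (a ⬝ᵥ a) + u ⬝ᵥ u := by
    rw [hΩ, Matrix.add_mulVec, Matrix.smul_mulVec, Matrix.one_mulVec,
      dotProduct_add, dotProduct_smul, smul_eq_mul, quadform]
  set W := wnorm Ω a with hWdef
  have hW2 : W ^ 2 = ρ * (a ⬝ᵥ a) + u ⬝ᵥ u := by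
    rw [hWdef, wnorm, Real.sq_sqrt, hval]
    rw [hval]
    nlinarith [dself_nonneg a, dself_nonneg u]
  have hW_nonneg : 0 ≤ W := Real.sqrt_nonneg _
  set N := opNorm Ξ with hNdef
  have hN : 0 ≤ N := norm_nonneg _
  have hsρ : 0 < Real.sqrt ρ := Real.sqrt_pos.mpr hρ
  have hsρ2 : Real.sqrt ρ ^ 2 = ρ := Real.sq_sqrt hρ.le
  have hU : vecNorm u ≤ W := by
    rw [hWdef, wnorm, hval, vecNorm]
    exact Real.sqrt_le_sqrt (by nlinarith [dself_nonneg a])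
  have hA : Real.sqrt ρ * vecNorm a ≤ W := by
    rw [vecNorm, ← Real.sqrt_mul hρ.le, hWdef, wnorm, hval]
    exact Real.sqrt_le_sqrt (by nlinarith [dself_nonneg u])
  have hWn : vecNorm w ≤ N * vecNorm a := mulVec_vecNorm_le Ξ a
  have hq : w ⬝ᵥ w = vecNorm w * vecNorm w := by
    have := vecNorm_sq w; nlinarith [this]
  have hs := cs_dot u w
  have habs : |w ⬝ᵥ w - 2 * (u ⬝ᵥ w)| ≤ vecNorm w * vecNorm w + 2 * (vecNorm u * vecNorm w) := by
    have h1 : |w ⬝ᵥ w - 2 * (u ⬝ᵥ w)| ≤ |w ⬝ᵥ w| + |2 * (u ⬝ᵥ w)| := abs_sub _ _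
    rw [abs_of_nonneg (dself_nonneg w), abs_mul, abs_two] at h1
    linarith
  rw [hdiff]
  have h1 : Real.sqrt ρ * vecNorm w ≤ N * W := by
    calc Real.sqrt ρ * vecNorm w ≤ Real.sqrt ρ * (N * vecNorm a) :=
          mul_le_mul_of_nonneg_left hWn hsρ.le
      _ = N * (Real.sqrt ρ * vecNorm a) := by ring
      _ ≤ N * W := mul_le_mul_of_nonneg_left hA hN
  have hwn0 : 0 ≤ vecNorm w := vecNorm_nonneg w
  have hun0 : 0 ≤ vecNorm u := vecNorm_nonneg u
  have h3 : Real.sqrt ρ * vecNorm u ≤ Real.sqrt ρ * W := mul_le_mul_of_nonneg_left hU hsρ.le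
  have h2 : (Real.sqrt ρ * vecNorm w) * (Real.sqrt ρ * vecNorm w) ≤ (N * W) * (N * W) :=
    mul_le_mul h1 h1 (by positivity) (by positivity)
  have h4 : (Real.sqrt ρ * vecNorm w) * (Real.sqrt ρ * vecNorm u) ≤ (N * W) * (Real.sqrt ρ * W) :=
    mul_le_mul h1 h3 (by positivity) (by positivity)
  have h5 : ρ * (vecNorm w * vecNorm w) ≤ (N * W) * (N * W) := by
    calc ρ * (vecNorm w * vecNorm w)
        = (Real.sqrt ρ * vecNorm w) * (Real.sqrt ρ * vecNorm w) := by
          conv_lhs => rw [← hsρ2]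
          ring
      _ ≤ (N * W) * (N * W) := h2
  have h6 : ρ * (vecNorm u * vecNorm w) ≤ (N * W) * (Real.sqrt ρ * W) := by
    calc ρ * (vecNorm u * vecNorm w)
        = (Real.sqrt ρ * vecNorm w) * (Real.sqrt ρ * vecNorm u) := by
          conv_lhs => rw [← hsρ2]
          ring
      _ ≤ (N * W) * (Real.sqrt ρ * W) := h4
  rw [show 2 / Real.sqrt ρ * W ^ 2 * N + 1 / ρ * W ^ 2 * N ^ 2
      = (2 * Real.sqrt ρ * W ^ 2 * N + W ^ 2 * N ^ 2) / ρ from by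
    field_simp
    linear_combination (-2 * W ^ 2 * N) * hsρ2]
  rw [le_div_iff₀ hρ]
  calc |w ⬝ᵥ w - 2 * (u ⬝ᵥ w)| * ρ
      ≤ (vecNorm w * vecNorm w + 2 * (vecNorm u * vecNorm w)) * ρ :=
        mul_le_mul_of_nonneg_right habs hρ.le
    _ = ρ * (vecNorm w * vecNorm w) + 2 * (ρ * (vecNorm u * vecNorm w)) := by ring
    _ ≤ (N * W) * (N * W) + 2 * ((N * W) * (Real.sqrt ρ * W)) := by linarith
    _ = 2 * Real.sqrt ρ * W ^ 2 * N + W ^ 2 * N ^ 2 := by ring
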